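/- Let A be a finitely-ambiguous NFA and S ⊆ Δ a support with L(A) = L(A_S). If S is not a bad support, then A is positively resolvable with any resolver over S: for every resolver R whose support equals S there exists λ > 0 such that L((P_R)_{≥λ}) = L(A). -/

import Mathlib

open scoped BigOperators

/-- A nondeterministic finite automaton over alphabet `σ` with states `Q`:
an initial state, a finite set of transitions and a finite set of accepting states. -/
structure NFA' (σ Q : Type) where
  init : Q
  trans : Finset (Q × σ × Q)
  accept : Finset Q

namespace NFA'

variable {σ Q : Type}

/-- `IsRun Δ p w ts r`: `ts` is a run on the word `w` from state `p` to state `r`,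
using transitions from `Δ`. -/
inductive IsRun (Δ : Finset (Q × σ × Q)) : Q → List σ → List (Q × σ × Q) → Q → Prop
  | nil (q : Q) : IsRun Δ q [] [] q
  | cons {p : Q} {a : σ} {q r : Q} {w : List σ} {ts : List (Q × σ × Q)} :
      (p, a, q) ∈ Δ → IsRun Δ q w ts r → IsRun Δ p (a :: w) ((p, a, q) :: ts) r

/-- `ts` is an accepting run of `A` on `w`. -/
def AccRun (A : NFA' σ Q) (w : List σ) (ts : List (Q × σ × Q)) : Prop :=
  ∃ r ∈ A.accept, IsRun A.trans A.init w ts r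

/-- The language of `A`: words admitting an accepting run. -/
def lang (A : NFA' σ Q) : Set (List σ) := {w | ∃ ts, A.AccRun w ts}

/-- `δ(q, u)`: the set of states reachable from `q` by a run on `u`. -/
def reach (A : NFA' σ Q) (q : Q) (u : List σ) : Set Q :=
  {r | ∃ ts, IsRun A.trans q u ts r}

/-- The word `u` admits an accepting run from the state `q`. -/
def AccFrom (A : NFA' σ Q) (q : Q) (u : List σ) : Prop :=
  ∃ r ∈ A.accept, ∃ ts, IsRun A.trans q u ts r

/-- `A_S`: the automaton `A` with transitions restricted to `S`. -/
def restrict (A : NFA' σ Q) (S : Finset (Q × σ × Q)) : NFA' σ Q :=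
  { A with trans := S }

/-- `A` is `k`-ambiguous: every word has at most `k` accepting runs. -/
def kAmbiguous (A : NFA' σ Q) (k : ℕ) : Prop :=
  ∀ w, {ts | A.AccRun w ts}.encard ≤ (k : ℕ∞)

/-- `A` is finitely-ambiguous. -/
def FinitelyAmbiguous (A : NFA' σ Q) : Prop := ∃ k : ℕ, 0 < k ∧ A.kAmbiguous k

/-- A memoryless stochastic resolver for `A`: probabilities, supported on the transitions
of `A`, summing to one over the outgoing transitions of every pair `(p, a)` that has at
least one outgoing transition (implicitly, `A` is completed with a non-accepting sink). -/
structure Resolver (A : NFA' σ Q) where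
  r : Q × σ × Q → ℝ
  nonneg : ∀ t, 0 ≤ r t
  le_one : ∀ t, r t ≤ 1
  supp : ∀ t, r t ≠ 0 → t ∈ A.trans
  sum_one : ∀ p a, (∃ q, (p, a, q) ∈ A.trans) →
      ∑ t ∈ A.trans, {t : Q × σ × Q | t.1 = p ∧ t.2.1 = a}.indicator r t = 1

/-- The probability of a run: the product of the probabilities of its transitions. -/
def runProb (f : Q × σ × Q → ℝ) (ts : List (Q × σ × Q)) : ℝ := (ts.map f).prod

/-- The acceptance probability of a word: the sum, over all accepting runs, of the
product of the transition probabilities along the run. -/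
noncomputable def accProb (A : NFA' σ Q) (f : Q × σ × Q → ℝ) (w : List σ) : ℝ :=
  ∑ᶠ ts ∈ {ts | A.AccRun w ts}, runProb f ts

/-- `A` is `λ`-memoryless-stochastically-resolvable. -/
def Resolvable (A : NFA' σ Q) (lam : ℝ) : Prop :=
  ∃ R : A.Resolver, {w | lam ≤ A.accProb R.r w} = A.lang

/-- `A` is positively (memoryless stochastically) resolvable. -/
def PositivelyResolvable (A : NFA' σ Q) : Prop :=
  ∃ lam : ℝ, 0 < lam ∧ A.Resolvable lam

/-- The support `S` is bad: no resolver whose support is exactly `S` witnesses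
positive resolvability. -/
def BadSupport (A : NFA' σ Q) (S : Finset (Q × σ × Q)) : Prop :=
  ∀ R : A.Resolver, (∀ t, R.r t ≠ 0 ↔ t ∈ S) →
    ∀ lam : ℝ, 0 < lam → {w | lam ≤ A.accProb R.r w} ≠ A.lang

/-- A transition is nondeterministic in `S`. -/
def NondetIn (S : Finset (Q × σ × Q)) (t : Q × σ × Q) : Prop :=
  t ∈ S ∧ ∃ q', q' ≠ t.2.2 ∧ (t.1, t.2.1, q') ∈ S

/-- The number of transitions of a run that are nondeterministic in `S`. -/
noncomputable def nondetCount (S : Finset (Q × σ × Q)) (ts : List (Q × σ × Q)) : ℕ :=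
  (ts.map (Set.indicator {t | NondetIn S t} (fun _ => 1))).sum

/-- `b(w)`: the minimal number of `S`-nondeterministic transitions over all accepting
runs of `w` in `A_S`. -/
noncomputable def minNondet (A : NFA' σ Q) (S : Finset (Q × σ × Q)) (w : List σ) : ℕ :=
  sInf {m | ∃ ts, (A.restrict S).AccRun w ts ∧ nondetCount S ts = m}

/-- The state of a run `ts` (started in `q0`) after `n` transitions. -/
def stateAt (q0 : Q) (ts : List (Q × σ × Q)) (n : ℕ) : Q :=
  match (ts.take n).getLast? with
  | some t => t.2.2
  | none => q0

/-- `Θ` makes `A` into a probabilistic finite automaton (PFA) based on `A`. -/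
def IsPFA (A : NFA' σ Q) (Θ : Q × σ × Q → ℝ) : Prop :=
  (∀ t ∈ A.trans, 0 < Θ t ∧ Θ t ≤ 1) ∧ (∀ t, t ∉ A.trans → Θ t = 0) ∧
  ∀ p a, (∃ q, (p, a, q) ∈ A.trans) →
    ∑ t ∈ A.trans, {t : Q × σ × Q | t.1 = p ∧ t.2.1 = a}.indicator Θ t = 1

/-- The PFA is simple: every transition has probability `1/2` or `1`. -/
def IsSimple (A : NFA' σ Q) (Θ : Q × σ × Q → ℝ) : Prop :=
  ∀ t ∈ A.trans, Θ t = 1/2 ∨ Θ t = 1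

end NFA'

open NFA'

section Aux

open scoped Classical

namespace NFA'

variable {σ Q : Type}

lemma runProb_nonneg {f : Q × σ × Q → ℝ} (hf : ∀ t, 0 ≤ f t) :
    ∀ ts, 0 ≤ runProb f ts := by
  intro ts
  induction ts with
  | nil => simp [runProb]
  | cons t ts ih =>
      have : runProb f (t :: ts) = f t * runProb f ts := by
        simp [runProb]
      rw [this]
      exact mul_nonneg (hf t) ih

lemma runProb_cons (f : Q × σ × Q → ℝ) (t : Q × σ × Q) (ts : List (Q × σ × Q)) :
    runProb f (t :: ts) = f t * runProb f ts := by simp [runProb]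

lemma nondetCount_cons (S : Finset (Q × σ × Q)) (t : Q × σ × Q) (ts : List (Q × σ × Q)) :
    nondetCount S (t :: ts)
      = Set.indicator {u | NondetIn S u} (fun _ => 1) t + nondetCount S ts := by
  simp [nondetCount]

lemma IsRun.mono {Δ Δ' : Finset (Q × σ × Q)} (h : Δ ⊆ Δ') {q : Q} {w : List σ}
    {ts : List (Q × σ × Q)} {r : Q} (hr : IsRun Δ q w ts r) : IsRun Δ' q w ts r := by
  induction hr with
  | nil q => exact .nil q
  | cons ht _ ih => exact .cons (h ht) ih

lemma IsRun.mem_trans {Δ : Finset (Q × σ × Q)} {q : Q} {w : List σ}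
    {ts : List (Q × σ × Q)} {r : Q} (hr : IsRun Δ q w ts r) : ∀ t ∈ ts, t ∈ Δ := by
  induction hr with
  | nil => simp
  | cons ht _ ih =>
      intro t htt
      rcases List.mem_cons.1 htt with rfl | h
      · exact ht
      · exact ih t h

lemma IsRun.restrictTo {Δ S : Finset (Q × σ × Q)} {q : Q} {w : List σ}
    {ts : List (Q × σ × Q)} {r : Q} (hr : IsRun Δ q w ts r)
    (hmem : ∀ t ∈ ts, t ∈ S) : IsRun S q w ts r := by
  induction hr with
  | nil q => exact .nil q
  | cons ht hrun ih =>
      exact .cons (hmem _ (List.mem_cons_self))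
        (ih fun t h => hmem t (List.mem_cons_of_mem _ h))

lemma resolver_sum {A : NFA' σ Q} {S : Finset (Q × σ × Q)} (hS : S ⊆ A.trans)
    (R : A.Resolver) (hsupp : ∀ t, R.r t ≠ 0 ↔ t ∈ S) (p : Q) (a : σ)
    (h : ∃ q, (p, a, q) ∈ S) :
    ∑ t ∈ S.filter (fun t => t.1 = p ∧ t.2.1 = a), R.r t = 1 := by
  obtain ⟨q, hq⟩ := h
  have h1 := R.sum_one p a ⟨q, hS hq⟩
  have h2 : ∑ t ∈ A.trans.filter (fun t => t.1 = p ∧ t.2.1 = a), R.r t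
      = ∑ t ∈ A.trans, Set.indicator {t : Q × σ × Q | t.1 = p ∧ t.2.1 = a} R.r t := by
    rw [Finset.sum_filter]
    apply Finset.sum_congr rfl
    intro t _
    by_cases ht : t.1 = p ∧ t.2.1 = a
    · rw [if_pos ht,
        Set.indicator_of_mem (show t ∈ {t : Q × σ × Q | t.1 = p ∧ t.2.1 = a} from ht)]
    · rw [if_neg ht,
        Set.indicator_of_notMem (show t ∉ {t : Q × σ × Q | t.1 = p ∧ t.2.1 = a} from ht)]
  have h3 : ∑ t ∈ S.filter (fun t => t.1 = p ∧ t.2.1 = a), R.r t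
      = ∑ t ∈ A.trans.filter (fun t => t.1 = p ∧ t.2.1 = a), R.r t := by
    apply Finset.sum_subset (Finset.filter_subset_filter _ hS)
    intro t ht hnt
    by_contra h0
    exact hnt (Finset.mem_filter.2 ⟨(hsupp t).1 h0, (Finset.mem_filter.1 ht).2⟩)
  rw [h3, h2, h1]

lemma resolver_det {A : NFA' σ Q} {S : Finset (Q × σ × Q)} (hS : S ⊆ A.trans)
    (R : A.Resolver) (hsupp : ∀ t, R.r t ≠ 0 ↔ t ∈ S) {t : Q × σ × Q}
    (htS : t ∈ S) (hdet : ¬ NondetIn S t) : R.r t = 1 := by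
  obtain ⟨p, a, q⟩ := t
  have hsum := resolver_sum hS R hsupp p a ⟨q, htS⟩
  have heq : S.filter (fun u => u.1 = p ∧ u.2.1 = a) = {(p, a, q)} := by
    ext u
    obtain ⟨u1, u2, u3⟩ := u
    simp only [Finset.mem_filter, Finset.mem_singleton, Prod.mk.injEq]
    constructor
    · rintro ⟨huS, rfl, rfl⟩
      refine ⟨rfl, rfl, ?_⟩
      by_contra hne
      exact hdet ⟨htS, u3, hne, huS⟩
    · rintro ⟨rfl, rfl, rfl⟩
      exact ⟨htS, rfl, rfl⟩
  rw [heq, Finset.sum_singleton] at hsum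
  exact hsum

lemma resolver_nondet_lt_one {A : NFA' σ Q} {S : Finset (Q × σ × Q)} (hS : S ⊆ A.trans)
    (R : A.Resolver) (hsupp : ∀ t, R.r t ≠ 0 ↔ t ∈ S) {t : Q × σ × Q}
    (htN : NondetIn S t) : R.r t < 1 := by
  obtain ⟨htS, q', hq'ne, hq'S⟩ := htN
  obtain ⟨p, a, q⟩ := t
  simp only at hq'ne hq'S
  have hsum := resolver_sum hS R hsupp p a ⟨q, htS⟩
  have htF : (p, a, q) ∈ S.filter (fun u => u.1 = p ∧ u.2.1 = a) :=
    Finset.mem_filter.2 ⟨htS, rfl, rfl⟩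
  have ht'F : (p, a, q') ∈ S.filter (fun u => u.1 = p ∧ u.2.1 = a) :=
    Finset.mem_filter.2 ⟨hq'S, rfl, rfl⟩
  have hne : (p, a, q) ≠ (p, a, q') := by
    intro h
    exact hq'ne (by simpa using h.symm)
  have hpos : 0 < R.r (p, a, q') :=
    lt_of_le_of_ne (R.nonneg _) (Ne.symm ((hsupp _).2 hq'S))
  have hsub : ({(p, a, q), (p, a, q')} : Finset (Q × σ × Q))
      ⊆ S.filter (fun u => u.1 = p ∧ u.2.1 = a) := by
    intro u hu
    rcases Finset.mem_insert.1 hu with rfl | hu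
    · exact htF
    · rw [Finset.mem_singleton.1 hu]; exact ht'F
  have hle := Finset.sum_le_sum_of_subset_of_nonneg hsub (fun i _ _ => R.nonneg i)
  rw [Finset.sum_pair hne, hsum] at hle
  linarith

lemma runProb_ge {A : NFA' σ Q} {S : Finset (Q × σ × Q)} (hS : S ⊆ A.trans)
    (R : A.Resolver) (hsupp : ∀ t, R.r t ≠ 0 ↔ t ∈ S) {c : ℝ} (hc0 : 0 < c)
    (hcle : ∀ t, NondetIn S t → c ≤ R.r t) :
    ∀ ts : List (Q × σ × Q), (∀ t ∈ ts, t ∈ S) →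
      c ^ nondetCount S ts ≤ runProb R.r ts := by
  intro ts
  induction ts with
  | nil => intro _; simp [runProb, nondetCount]
  | cons t ts ih =>
      intro hmem
      have htS : t ∈ S := hmem t (List.mem_cons_self)
      have h2 := ih (fun u hu => hmem u (List.mem_cons_of_mem _ hu))
      rw [nondetCount_cons, runProb_cons]
      by_cases hnd : NondetIn S t
      · rw [Set.indicator_of_mem (show t ∈ {u | NondetIn S u} from hnd), pow_add, pow_one]
        exact mul_le_mul (hcle t hnd) h2 (pow_nonneg hc0.le _) (R.nonneg t)
      · rw [Set.indicator_of_notMem (show t ∉ {u | NondetIn S u} from hnd),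
          resolver_det hS R hsupp htS hnd]
        simpa using h2

lemma runProb_le {A : NFA' σ Q} {S : Finset (Q × σ × Q)} (hS : S ⊆ A.trans)
    (R : A.Resolver) (hsupp : ∀ t, R.r t ≠ 0 ↔ t ∈ S) {ρ : ℝ} (hρ0 : 0 ≤ ρ)
    (hρle : ∀ t, NondetIn S t → R.r t ≤ ρ) :
    ∀ ts : List (Q × σ × Q), (∀ t ∈ ts, t ∈ S) →
      runProb R.r ts ≤ ρ ^ nondetCount S ts := by
  intro ts
  induction ts with
  | nil => intro _; simp [runProb, nondetCount]
  | cons t ts ih =>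
      intro hmem
      have htS : t ∈ S := hmem t (List.mem_cons_self)
      have h2 := ih (fun u hu => hmem u (List.mem_cons_of_mem _ hu))
      rw [nondetCount_cons, runProb_cons]
      by_cases hnd : NondetIn S t
      · rw [Set.indicator_of_mem (show t ∈ {u | NondetIn S u} from hnd), pow_add, pow_one]
        exact mul_le_mul (hρle t hnd) h2 (runProb_nonneg R.nonneg ts) hρ0
      · rw [Set.indicator_of_notMem (show t ∉ {u | NondetIn S u} from hnd),
          resolver_det hS R hsupp htS hnd]
        simpa using h2

end NFA'

end Aux


/-- If `S` is not a bad support of a finitely-ambiguous NFA `A` (with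
`L(A) = L(A_S)`), then every resolver whose support is exactly `S` positively
resolves `A`. -/
theorem stmt8 {σ Q : Type} (A : NFA' σ Q) (hfa : A.FinitelyAmbiguous)
    (S : Finset (Q × σ × Q)) (hS : S ⊆ A.trans)
    (hlang : A.lang = (A.restrict S).lang)
    (hgood : ¬ A.BadSupport S) :
    ∀ R : A.Resolver, (∀ t, R.r t ≠ 0 ↔ t ∈ S) →
      ∃ lam : ℝ, 0 < lam ∧ {w | lam ≤ A.accProb R.r w} = A.lang := by
  classical
  intro R hsuppR
  obtain ⟨k, hk0, hkamb⟩ := hfa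
  rw [BadSupport] at hgood
  push_neg at hgood
  obtain ⟨R0, hsupp0, lam0, hlam0, hres0⟩ := hgood
  set N := S.filter (fun t => NondetIn S t) with hN
  have hmemN : ∀ t, NondetIn S t → t ∈ N := fun t ht =>
    Finset.mem_filter.2 ⟨ht.1, ht⟩
  -- pick ρ : upper bound for R0 on nondeterministic transitions
  obtain ⟨ρ, hρ0, hρ1, hρle⟩ :
      ∃ ρ : ℝ, 0 ≤ ρ ∧ ρ < 1 ∧ ∀ t, NondetIn S t → R0.r t ≤ ρ := by
    rcases N.eq_empty_or_nonempty with hNe | hNne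
    · refine ⟨1/2, by norm_num, by norm_num, fun t ht => absurd (hmemN t ht) (by simp [hNe])⟩
    · have hIm : (N.image R0.r).Nonempty := hNne.image _
      refine ⟨(N.image R0.r).max' hIm, ?_, ?_, ?_⟩
      · obtain ⟨x, hx⟩ := hIm
        obtain ⟨t, htN, rfl⟩ := Finset.mem_image.1 hx
        exact le_trans (R0.nonneg t) (Finset.le_max' _ _ hx)
      · obtain ⟨t, htN, hmax⟩ := Finset.mem_image.1 ((N.image R0.r).max'_mem hIm)
        rw [← hmax]
        exact resolver_nondet_lt_one hS R0 hsupp0 (Finset.mem_filter.1 htN).2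
      · intro t ht
        exact Finset.le_max' _ _ (Finset.mem_image_of_mem _ (hmemN t ht))
  -- pick c : positive lower bound for R on nondeterministic transitions
  obtain ⟨c, hc0, hc1, hcle⟩ :
      ∃ c : ℝ, 0 < c ∧ c ≤ 1 ∧ ∀ t, NondetIn S t → c ≤ R.r t := by
    rcases N.eq_empty_or_nonempty with hNe | hNne
    · exact ⟨1, one_pos, le_refl 1, fun t ht => absurd (hmemN t ht) (by simp [hNe])⟩
    · have hIm : (N.image R.r).Nonempty := hNne.image _
      obtain ⟨t0, ht0N, hmin⟩ := Finset.mem_image.1 ((N.image R.r).min'_mem hIm)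
      refine ⟨(N.image R.r).min' hIm, ?_, ?_, ?_⟩
      · rw [← hmin]
        exact lt_of_le_of_ne (R.nonneg t0)
          (Ne.symm ((hsuppR t0).2 (Finset.mem_filter.1 ht0N).1))
      · rw [← hmin]
        exact R.le_one t0
      · intro t ht
        exact Finset.min'_le _ _ (Finset.mem_image_of_mem _ (hmemN t ht))
  -- finiteness of accepting-run sets
  have hfin : ∀ w : List σ, {ts | A.AccRun w ts}.Finite := by
    intro w
    have h := hkamb w
    rw [← Set.encard_ne_top_iff]
    intro htop
    rw [htop] at h
    exact absurd h (by simp)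
  have haccProb : ∀ (f : Q × σ × Q → ℝ) (w : List σ),
      A.accProb f w = ∑ ts ∈ (hfin w).toFinset, runProb f ts := by
    intro f w
    rw [accProb, ← finsum_mem_coe_finset, (hfin w).coe_toFinset]
  have hcard : ∀ w : List σ, (hfin w).toFinset.card ≤ k := by
    intro w
    have : ((hfin w).toFinset.card : ℕ∞) ≤ (k : ℕ∞) := by
      rw [← Set.encard_coe_eq_coe_finsetCard, (hfin w).coe_toFinset]
      exact hkamb w
    exact_mod_cast this
  -- upper bound for the good resolver
  have hupper : ∀ w ∈ A.lang, A.accProb R0.r w ≤ (k : ℝ) * ρ ^ A.minNondet S w := by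
    intro w hw
    rw [haccProb]
    have hterm : ∀ ts ∈ (hfin w).toFinset, runProb R0.r ts ≤ ρ ^ A.minNondet S w := by
      intro ts hts
      rw [Set.Finite.mem_toFinset] at hts
      by_cases hin : ∀ t ∈ ts, t ∈ S
      · obtain ⟨r, hr, hrun⟩ := hts
        have hrunS : IsRun S A.init w ts r := hrun.restrictTo hin
        have hb : A.minNondet S w ≤ nondetCount S ts :=
          Nat.sInf_le ⟨ts, ⟨r, hr, hrunS⟩, rfl⟩
        calc runProb R0.r ts ≤ ρ ^ nondetCount S ts :=
              runProb_le hS R0 hsupp0 hρ0 hρle ts hin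
          _ ≤ ρ ^ A.minNondet S w := pow_le_pow_of_le_one hρ0 hρ1.le hb
      · push_neg at hin
        obtain ⟨t, hts', htS⟩ := hin
        have hz : R0.r t = 0 := by
          by_contra h
          exact htS ((hsupp0 t).1 h)
        have hzero : runProb R0.r ts = 0 :=
          List.prod_eq_zero (hz ▸ List.mem_map_of_mem (f := R0.r) hts')
        rw [hzero]
        exact pow_nonneg hρ0 _
    calc ∑ ts ∈ (hfin w).toFinset, runProb R0.r ts
        ≤ (hfin w).toFinset.card • (ρ ^ A.minNondet S w) :=
          Finset.sum_le_card_nsmul _ _ _ hterm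
      _ = ((hfin w).toFinset.card : ℝ) * ρ ^ A.minNondet S w := nsmul_eq_mul _ _
      _ ≤ (k : ℝ) * ρ ^ A.minNondet S w := by
          apply mul_le_mul_of_nonneg_right _ (pow_nonneg hρ0 _)
          exact_mod_cast hcard w
  -- choose n with k * ρ^n < lam0
  obtain ⟨n, hn⟩ : ∃ n : ℕ, (k : ℝ) * ρ ^ n < lam0 := by
    have h2 : Filter.Tendsto (fun i : ℕ => (k : ℝ) * ρ ^ i) Filter.atTop (nhds 0) := by
      simpa using (tendsto_pow_atTop_nhds_zero_of_lt_one hρ0 hρ1).const_mul (k : ℝ)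
    exact (h2.eventually (gt_mem_nhds hlam0)).exists
  -- b(w) ≤ n for all w in the language
  have hble : ∀ w ∈ A.lang, A.minNondet S w ≤ n := by
    intro w hw
    by_contra hbn
    push_neg at hbn
    have h1 : lam0 ≤ A.accProb R0.r w := (Set.ext_iff.1 hres0 w).2 hw
    have h3 : (k : ℝ) * ρ ^ A.minNondet S w ≤ (k : ℝ) * ρ ^ n := by
      apply mul_le_mul_of_nonneg_left _ (by positivity)
      exact pow_le_pow_of_le_one hρ0 hρ1.le hbn.le
    have := le_trans h1 (le_trans (hupper w hw) h3)
    linarith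
  -- conclusion : λ = c ^ n
  refine ⟨c ^ n, pow_pos hc0 n, ?_⟩
  ext w
  simp only [Set.mem_setOf_eq]
  constructor
  · intro hle
    by_contra hw
    have hempty : {ts | A.AccRun w ts} = ∅ := by
      ext ts
      simp only [Set.mem_setOf_eq, Set.mem_empty_iff_false, iff_false]
      intro h
      exact hw ⟨ts, h⟩
    have hz : A.accProb R.r w = 0 := by
      rw [accProb, hempty, finsum_mem_empty]
    rw [hz] at hle
    exact absurd hle (not_le.2 (pow_pos hc0 n))
  · intro hw
    have hne : {m | ∃ ts, (A.restrict S).AccRun w ts ∧ nondetCount S ts = m}.Nonempty := by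
      have hw' : w ∈ (A.restrict S).lang := hlang ▸ hw
      obtain ⟨ts, hts⟩ := hw'
      exact ⟨nondetCount S ts, ts, hts, rfl⟩
    obtain ⟨ts, hts, hcount⟩ := Nat.sInf_mem hne
    obtain ⟨r, hr, hrun⟩ := hts
    have hrun' : IsRun S A.init w ts r := hrun
    have hmemS : ∀ t ∈ ts, t ∈ S := hrun'.mem_trans
    have hrunA : IsRun A.trans A.init w ts r := hrun'.mono hS
    have htsA : ts ∈ (hfin w).toFinset := by
      rw [Set.Finite.mem_toFinset]
      exact ⟨r, hr, hrunA⟩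
    have h1 : runProb R.r ts ≤ A.accProb R.r w := by
      rw [haccProb]
      exact Finset.single_le_sum (fun t _ => runProb_nonneg R.nonneg t) htsA
    have h2 : c ^ n ≤ c ^ nondetCount S ts := by
      apply pow_le_pow_of_le_one hc0.le hc1
      rw [hcount]
      exact hble w hw
    have h3 : c ^ nondetCount S ts ≤ runProb R.r ts :=
      runProb_ge hS R hsuppR hc0 hcle ts hmemS
    linarith
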